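/- Let A = (A_{ij}) and B = (B_{ij}) be n×(n+1) matrices (rows indexed 1..n, columns indexed 0..n) over a field of characteristic zero. Let M be the (2n+1)×(2n+1) matrix whose first n rows are (A restricted to columns 1..n | B over columns 0..n), whose next n rows are (B restricted to columns 1..n | A over columns 0..n), and whose last row is all 1's. Then det M = (1/2) · det_{1≤i,j≤n}(A_{ij} - B_{ij}) · det N, where N is the (n+1)×(n+1) matrix whose first n rows are (A_{ij} + B_{ij}) for columns 0..n and whose last row is all 2's. -/

import Mathlib

namespace DetBlockAux

variable {K : Type*} [Field K] {n : ℕ}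

/-- Row operation matrix: `Rᵢ ← Rᵢ - Rᵢ₊ₙ` for `i < n`. -/
def E (K : Type*) [Field K] (n : ℕ) : Matrix (Fin (2*n+1)) (Fin (2*n+1)) K :=
  1 + Matrix.of (fun i k : Fin (2*n+1) =>
    if h : (i : ℕ) < n then
      (if k = (⟨(i : ℕ) + n, by omega⟩ : Fin (2*n+1)) then -1 else 0)
    else 0)

/-- Row operation matrix: `Rᵢ ← Rᵢ + (1/2) Rᵢ₋ₙ` for `n ≤ i < 2n`. -/
def E2 (K : Type*) [Field K] (n : ℕ) : Matrix (Fin (2*n+1)) (Fin (2*n+1)) K :=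
  1 + Matrix.of (fun i k : Fin (2*n+1) =>
    if h : n ≤ (i : ℕ) ∧ (i : ℕ) < 2*n then
      (if k = (⟨(i : ℕ) - n, by omega⟩ : Fin (2*n+1)) then (2:K)⁻¹ else 0)
    else 0)

/-- Column operation matrix: `Cₖ ← Cₖ - Cₖ₊ₙ₊₁` for `k < n`. -/
def F (K : Type*) [Field K] (n : ℕ) : Matrix (Fin (2*n+1)) (Fin (2*n+1)) K :=
  1 + Matrix.of (fun j k : Fin (2*n+1) =>
    if h : (k : ℕ) < n then
      (if j = (⟨(k : ℕ) + n + 1, by omega⟩ : Fin (2*n+1)) then -1 else 0)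
    else 0)

lemma det_E : (E K n).det = 1 := by
  have ht : (E K n).BlockTriangular id := by
    intro i j hij
    have hij' : j < i := hij
    simp only [E, Matrix.add_apply, Matrix.of_apply]
    rw [Matrix.one_apply_ne (ne_of_gt hij')]
    split_ifs with h h2
    · exfalso
      have hv : (j : ℕ) = (i : ℕ) + n := congrArg Fin.val h2
      have hv2 : (j : ℕ) < (i : ℕ) := hij'
      omega
    · ring
    · ring
  rw [Matrix.det_of_upperTriangular ht]
  refine Finset.prod_eq_one fun i _ => ?_
  simp only [E, Matrix.add_apply, Matrix.of_apply, Matrix.one_apply_eq]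
  split_ifs with h h2
  · exfalso
    have hv : (i : ℕ) = (i : ℕ) + n := congrArg Fin.val h2
    omega
  · ring
  · ring

lemma det_E2 : (E2 K n).det = 1 := by
  have ht : (E2 K n).BlockTriangular OrderDual.toDual := by
    intro i j hij
    have hij' : i < j := hij
    simp only [E2, Matrix.add_apply, Matrix.of_apply]
    rw [Matrix.one_apply_ne (ne_of_lt hij')]
    split_ifs with h h2
    · exfalso
      have hv : (j : ℕ) = (i : ℕ) - n := congrArg Fin.val h2
      have hv2 : (i : ℕ) < (j : ℕ) := hij'
      omega
    · ring
    · ring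
  rw [Matrix.det_of_lowerTriangular _ ht]
  refine Finset.prod_eq_one fun i _ => ?_
  simp only [E2, Matrix.add_apply, Matrix.of_apply, Matrix.one_apply_eq]
  split_ifs with h h2
  · exfalso
    have hv : (i : ℕ) = (i : ℕ) - n := congrArg Fin.val h2
    omega
  · ring
  · ring

lemma det_F : (F K n).det = 1 := by
  have ht : (F K n).BlockTriangular OrderDual.toDual := by
    intro i j hij
    have hij' : i < j := hij
    simp only [F, Matrix.add_apply, Matrix.of_apply]
    rw [Matrix.one_apply_ne (ne_of_lt hij')]
    split_ifs with h h2
    · exfalso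
      have hv : (i : ℕ) = (j : ℕ) + n + 1 := congrArg Fin.val h2
      have hv2 : (i : ℕ) < (j : ℕ) := hij'
      omega
    · ring
    · ring
  rw [Matrix.det_of_lowerTriangular _ ht]
  refine Finset.prod_eq_one fun i _ => ?_
  simp only [F, Matrix.add_apply, Matrix.of_apply, Matrix.one_apply_eq]
  split_ifs with h h2
  · exfalso
    have hv : (i : ℕ) = (i : ℕ) + n + 1 := congrArg Fin.val h2
    omega
  · ring
  · ring

lemma E_mul (M : Matrix (Fin (2*n+1)) (Fin (2*n+1)) K) (i j : Fin (2*n+1)) :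
    (E K n * M) i j
      = M i j + (if h : (i : ℕ) < n then -(M ⟨(i : ℕ) + n, by omega⟩ j) else 0) := by
  rw [E, Matrix.add_mul, Matrix.one_mul, Matrix.add_apply]
  congr 1
  rw [Matrix.mul_apply]
  by_cases h : (i : ℕ) < n
  · simp [h, ite_mul]
  · simp [h]

lemma E2_mul (M : Matrix (Fin (2*n+1)) (Fin (2*n+1)) K) (i j : Fin (2*n+1)) :
    (E2 K n * M) i j
      = M i j + (if h : n ≤ (i : ℕ) ∧ (i : ℕ) < 2*n then
          (2:K)⁻¹ * M ⟨(i : ℕ) - n, by omega⟩ j else 0) := by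
  rw [E2, Matrix.add_mul, Matrix.one_mul, Matrix.add_apply]
  congr 1
  rw [Matrix.mul_apply]
  by_cases h : n ≤ (i : ℕ) ∧ (i : ℕ) < 2*n
  · simp [h, ite_mul]
  · simp [h]

lemma mul_F (M : Matrix (Fin (2*n+1)) (Fin (2*n+1)) K) (i k : Fin (2*n+1)) :
    (M * F K n) i k
      = M i k + (if h : (k : ℕ) < n then -(M i ⟨(k : ℕ) + n + 1, by omega⟩) else 0) := by
  rw [F, Matrix.mul_add, Matrix.mul_one, Matrix.add_apply]
  congr 1
  rw [Matrix.mul_apply]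
  by_cases h : (k : ℕ) < n
  · simp [h, mul_ite]
  · simp [h]

end DetBlockAux

open DetBlockAux in
theorem det_block_with_ones_row
    {K : Type*} [Field K] [CharZero K] {n : ℕ}
    (A B : Matrix (Fin n) (Fin (n + 1)) K) :
    (Matrix.of fun i j : Fin (2 * n + 1) =>
        if hi : (i : ℕ) < n then
          (if hj : (j : ℕ) < n then A ⟨i, hi⟩ ⟨(j : ℕ) + 1, by omega⟩
           else B ⟨i, hi⟩ ⟨(j : ℕ) - n, by have := j.isLt; omega⟩)
        else if hi2 : (i : ℕ) < 2 * n then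
          (if hj : (j : ℕ) < n then B ⟨(i : ℕ) - n, by omega⟩ ⟨(j : ℕ) + 1, by omega⟩
           else A ⟨(i : ℕ) - n, by omega⟩ ⟨(j : ℕ) - n, by have := j.isLt; omega⟩)
        else 1).det
    = (1 / 2)
      * (Matrix.of fun i j : Fin n =>
          A i ⟨(j : ℕ) + 1, by have := j.isLt; omega⟩
          - B i ⟨(j : ℕ) + 1, by have := j.isLt; omega⟩).det
      * (Matrix.of fun i j : Fin (n + 1) =>
          if hi : (i : ℕ) < n then A ⟨i, hi⟩ j + B ⟨i, hi⟩ j else 2).det := by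
  have key1 : ∀ a b : K, a + -b = a - b := fun a b => (sub_eq_add_neg a b).symm
  have key2 : ∀ a b : K, b + (2:K)⁻¹ * (a - b) = 2⁻¹ * (a + b) := fun a b => by
    field_simp; ring
  have key2' : ∀ a b : K, b + (2:K)⁻¹ * (a - b) = 2⁻¹ * (b + a) := fun a b => by
    field_simp; ring
  have key3 : ∀ a b : K, (a - b) + -(b - a) = 2 * (a - b) := fun a b => by ring
  have key4 : ∀ a : K, a + -a = 0 := fun a => by ring
  set M : Matrix (Fin (2*n+1)) (Fin (2*n+1)) K := Matrix.of fun i j : Fin (2 * n + 1) =>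
        if hi : (i : ℕ) < n then
          (if hj : (j : ℕ) < n then A ⟨i, hi⟩ ⟨(j : ℕ) + 1, by omega⟩
           else B ⟨i, hi⟩ ⟨(j : ℕ) - n, by have := j.isLt; omega⟩)
        else if hi2 : (i : ℕ) < 2 * n then
          (if hj : (j : ℕ) < n then B ⟨(i : ℕ) - n, by omega⟩ ⟨(j : ℕ) + 1, by omega⟩
           else A ⟨(i : ℕ) - n, by omega⟩ ⟨(j : ℕ) - n, by have := j.isLt; omega⟩)
        else 1 with hM
  set M1 : Matrix (Fin (2*n+1)) (Fin (2*n+1)) K := Matrix.of fun i j : Fin (2 * n + 1) =>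
        if hi : (i : ℕ) < n then
          (if hj : (j : ℕ) < n then
            A ⟨i, hi⟩ ⟨(j : ℕ) + 1, by omega⟩ - B ⟨i, hi⟩ ⟨(j : ℕ) + 1, by omega⟩
           else B ⟨i, hi⟩ ⟨(j : ℕ) - n, by have := j.isLt; omega⟩
             - A ⟨i, hi⟩ ⟨(j : ℕ) - n, by have := j.isLt; omega⟩)
        else if hi2 : (i : ℕ) < 2 * n then
          (if hj : (j : ℕ) < n then B ⟨(i : ℕ) - n, by omega⟩ ⟨(j : ℕ) + 1, by omega⟩
           else A ⟨(i : ℕ) - n, by omega⟩ ⟨(j : ℕ) - n, by have := j.isLt; omega⟩)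
        else 1 with hM1
  set M2 : Matrix (Fin (2*n+1)) (Fin (2*n+1)) K := Matrix.of fun i j : Fin (2 * n + 1) =>
        if hi : (i : ℕ) < n then
          (if hj : (j : ℕ) < n then
            A ⟨i, hi⟩ ⟨(j : ℕ) + 1, by omega⟩ - B ⟨i, hi⟩ ⟨(j : ℕ) + 1, by omega⟩
           else B ⟨i, hi⟩ ⟨(j : ℕ) - n, by have := j.isLt; omega⟩
             - A ⟨i, hi⟩ ⟨(j : ℕ) - n, by have := j.isLt; omega⟩)
        else if hi2 : (i : ℕ) < 2 * n then
          (if hj : (j : ℕ) < n then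
            (2:K)⁻¹ * (A ⟨(i : ℕ) - n, by omega⟩ ⟨(j : ℕ) + 1, by omega⟩
              + B ⟨(i : ℕ) - n, by omega⟩ ⟨(j : ℕ) + 1, by omega⟩)
           else (2:K)⁻¹ * (A ⟨(i : ℕ) - n, by omega⟩ ⟨(j : ℕ) - n, by have := j.isLt; omega⟩
              + B ⟨(i : ℕ) - n, by omega⟩ ⟨(j : ℕ) - n, by have := j.isLt; omega⟩))
        else 1 with hM2
  set M3 : Matrix (Fin (2*n+1)) (Fin (2*n+1)) K := Matrix.of fun i j : Fin (2 * n + 1) =>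
        if hi : (i : ℕ) < n then
          (if hj : (j : ℕ) < n then
            2 * (A ⟨i, hi⟩ ⟨(j : ℕ) + 1, by omega⟩ - B ⟨i, hi⟩ ⟨(j : ℕ) + 1, by omega⟩)
           else B ⟨i, hi⟩ ⟨(j : ℕ) - n, by have := j.isLt; omega⟩
             - A ⟨i, hi⟩ ⟨(j : ℕ) - n, by have := j.isLt; omega⟩)
        else if hi2 : (i : ℕ) < 2 * n then
          (if hj : (j : ℕ) < n then 0
           else (2:K)⁻¹ * (A ⟨(i : ℕ) - n, by omega⟩ ⟨(j : ℕ) - n, by have := j.isLt; omega⟩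
              + B ⟨(i : ℕ) - n, by omega⟩ ⟨(j : ℕ) - n, by have := j.isLt; omega⟩))
        else (if hj : (j : ℕ) < n then 0 else 1) with hM3
  have hEM : E K n * M = M1 := by
    ext i j
    rw [E_mul]
    by_cases hi : (i : ℕ) < n
    · rw [dif_pos hi]
      have hin1 : ¬ ((i : ℕ) + n < n) := by omega
      have hin2 : (i : ℕ) + n < 2 * n := by omega
      have hsub : (i : ℕ) + n - n = (i : ℕ) := by omega
      by_cases hj : (j : ℕ) < n
      · simp only [hM, hM1, Matrix.of_apply, hsub, dif_pos hi, dif_pos hj, dif_neg hin1,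
          dif_pos hin2, Fin.eta]
        exact key1 _ _
      · simp only [hM, hM1, Matrix.of_apply, hsub, dif_pos hi, dif_neg hj, dif_neg hin1,
          dif_pos hin2, Fin.eta]
        exact key1 _ _
    · rw [dif_neg hi]
      rw [hM, hM1]
      simp only [Matrix.of_apply, dif_neg hi, add_zero]
  have hEM2 : E2 K n * M1 = M2 := by
    ext i j
    rw [E2_mul]
    by_cases hc : n ≤ (i : ℕ) ∧ (i : ℕ) < 2*n
    · rw [dif_pos hc]
      have hi : ¬ ((i : ℕ) < n) := by omega
      have hi2 : (i : ℕ) < 2 * n := hc.2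
      have hsub : (i : ℕ) - n < n := by omega
      by_cases hj : (j : ℕ) < n
      · simp only [hM1, hM2, Matrix.of_apply, dif_neg hi, dif_pos hi2, dif_pos hj,
          dif_pos hsub, Fin.eta]
        exact key2 _ _
      · simp only [hM1, hM2, Matrix.of_apply, dif_neg hi, dif_pos hi2, dif_neg hj,
          dif_pos hsub, Fin.eta]
        exact key2' _ _
    · rw [dif_neg hc]
      rw [hM1, hM2]
      by_cases hi : (i : ℕ) < n
      · simp only [Matrix.of_apply, dif_pos hi, add_zero]
      · have hi2 : ¬ ((i : ℕ) < 2 * n) := by omega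
        simp only [Matrix.of_apply, dif_neg hi, dif_neg hi2, add_zero]
  have hMF : M2 * F K n = M3 := by
    ext i k
    rw [mul_F]
    by_cases hk : (k : ℕ) < n
    · rw [dif_pos hk]
      have hk1 : ¬ ((k : ℕ) + n + 1 < n) := by omega
      have hsub : (k : ℕ) + n + 1 - n = (k : ℕ) + 1 := by omega
      by_cases hi : (i : ℕ) < n
      · simp only [hM2, hM3, Matrix.of_apply, hsub, dif_pos hi, dif_pos hk, dif_neg hk1,
          Fin.eta]
        exact key3 _ _
      · by_cases hi2 : (i : ℕ) < 2 * n
        · simp only [hM2, hM3, Matrix.of_apply, hsub, dif_neg hi, dif_pos hi2, dif_pos hk,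
            dif_neg hk1, Fin.eta]
          exact key4 _
        · simp only [hM2, hM3, Matrix.of_apply, dif_neg hi, dif_neg hi2, dif_pos hk,
            dif_neg hk1]
          exact key4 _
    · rw [dif_neg hk]
      rw [hM2, hM3]
      by_cases hi : (i : ℕ) < n
      · simp only [Matrix.of_apply, dif_pos hi, dif_neg hk, add_zero]
      · by_cases hi2 : (i : ℕ) < 2 * n
        · simp only [Matrix.of_apply, dif_neg hi, dif_pos hi2, dif_neg hk, add_zero]
        · simp only [Matrix.of_apply, dif_neg hi, dif_neg hi2, dif_neg hk, add_zero]
  have hdet3 : M3.det = M.det := by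
    rw [← hMF, ← hEM2, ← hEM, Matrix.det_mul, Matrix.det_mul, Matrix.det_mul,
      det_E, det_E2, det_F]
    ring
  -- block decomposition of M3
  have hn : 2 * n + 1 = n + (n + 1) := by omega
  set e : Fin (2*n+1) ≃ Fin n ⊕ Fin (n+1) := (finCongr hn).trans finSumFinEquiv.symm with he
  set X : Matrix (Fin n) (Fin n) K :=
    Matrix.of fun i j : Fin n =>
      2 * (A i ⟨(j : ℕ) + 1, by have := j.isLt; omega⟩
        - B i ⟨(j : ℕ) + 1, by have := j.isLt; omega⟩) with hX
  set Y : Matrix (Fin n) (Fin (n+1)) K := Matrix.of fun i j => B i j - A i j with hY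
  set D : Matrix (Fin (n+1)) (Fin (n+1)) K :=
    Matrix.of fun i j : Fin (n + 1) =>
      if hi : (i : ℕ) < n then (2:K)⁻¹ * (A ⟨i, hi⟩ j + B ⟨i, hi⟩ j) else 1 with hD
  have hcoe1 : ∀ a : Fin n, ((e.symm (Sum.inl a) : Fin (2*n+1)) : ℕ) = (a : ℕ) := by
    intro a; simp [he]
  have hcoe2 : ∀ a : Fin (n+1), ((e.symm (Sum.inr a) : Fin (2*n+1)) : ℕ) = n + (a : ℕ) := by
    intro a; simp [he]
  have hsub : M3.submatrix e.symm e.symm = Matrix.fromBlocks X Y 0 D := by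
    ext x y
    cases x with
    | inl i =>
      cases y with
      | inl j =>
        have hi := i.isLt; have hj := j.isLt
        simp only [Matrix.submatrix_apply, hM3, Matrix.of_apply, hcoe1,
          Matrix.fromBlocks_apply₁₁, hX, dif_pos hi, dif_pos hj, Fin.eta]
      | inr j =>
        have hi := i.isLt
        have h1 : ¬ (n + (j : ℕ) < n) := by omega
        have h2 : n + (j : ℕ) - n = (j : ℕ) := by omega
        simp only [Matrix.submatrix_apply, hM3, Matrix.of_apply, hcoe1, hcoe2,
          Matrix.fromBlocks_apply₁₂, hY, dif_pos hi, dif_neg h1, h2, Fin.eta]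
    | inr i =>
      cases y with
      | inl j =>
        have hj := j.isLt
        have h1 : ¬ (n + (i : ℕ) < n) := by omega
        simp only [Matrix.submatrix_apply, hM3, Matrix.of_apply, hcoe1, hcoe2,
          Matrix.fromBlocks_apply₂₁, Matrix.zero_apply, dif_neg h1]
        by_cases h2 : n + (i : ℕ) < 2 * n
        · rw [dif_pos h2, dif_pos hj]
        · rw [dif_neg h2, dif_pos hj]
      | inr j =>
        have h1 : ¬ (n + (i : ℕ) < n) := by omega
        have h3 : n + (i : ℕ) - n = (i : ℕ) := by omega
        have h4 : ¬ (n + (j : ℕ) < n) := by omega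
        have h5 : n + (j : ℕ) - n = (j : ℕ) := by omega
        simp only [Matrix.submatrix_apply, hM3, Matrix.of_apply, hcoe2,
          Matrix.fromBlocks_apply₂₂, hD, dif_neg h1]
        by_cases h2 : n + (i : ℕ) < 2 * n
        · have h6 : (i : ℕ) < n := by omega
          rw [dif_pos h2, dif_neg h4]
          simp only [h3, h5, dif_pos h6, Fin.eta]
        · have h6 : ¬ ((i : ℕ) < n) := by omega
          rw [dif_neg h2, dif_neg h4]
          simp only [Matrix.of_apply, dif_neg h6]
  have hdetblocks : M3.det = X.det * D.det := by
    rw [← Matrix.det_submatrix_equiv_self e.symm M3, hsub, Matrix.det_fromBlocks_zero₂₁]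
  set dAB : Matrix (Fin n) (Fin n) K := Matrix.of fun i j : Fin n =>
      A i ⟨(j : ℕ) + 1, by have := j.isLt; omega⟩
      - B i ⟨(j : ℕ) + 1, by have := j.isLt; omega⟩ with hdAB
  set N : Matrix (Fin (n+1)) (Fin (n+1)) K := Matrix.of fun i j : Fin (n + 1) =>
      if hi : (i : ℕ) < n then A ⟨i, hi⟩ j + B ⟨i, hi⟩ j else 2 with hN
  have hXd : X.det = 2^n * dAB.det := by
    have hX2 : X = (2:K) • dAB := by
      ext i j; simp [hX, hdAB]
    rw [hX2, Matrix.det_smul]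
    simp
  have hDd : D.det = (2:K)⁻¹^(n+1) * N.det := by
    have hD2 : D = (2:K)⁻¹ • N := by
      ext i j
      simp only [hD, hN, Matrix.smul_apply, Matrix.of_apply, smul_eq_mul, mul_dite]
      split_ifs with h
      · rfl
      · norm_num
    rw [hD2, Matrix.det_smul]
    simp
  rw [← hdet3, hdetblocks, hXd, hDd]
  have h2 : (2:K) ≠ 0 := two_ne_zero
  field_simp
  have h12 : ((1:K) / 2) ^ (n + 1) * (2 ^ n * 2) = 1 := by rw [← pow_succ, ← mul_pow]; norm_num
  linear_combination (dAB.det * N.det) * h12
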